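/- For all n ≥ 1, x^n = Σ_{k=0}^{⌊n/2⌋} C(n,k) l_{n-2k}(x), where l_j are the Lucas-type polynomials. -/

import Mathlib

open Finset

theorem lucas_poly_moment_expansion
    (l : ℕ → ℝ → ℝ)
    (h0 : ∀ x, l 0 x = 1) (h1 : ∀ x, l 1 x = x)
    (h2 : ∀ x, l 2 x = x ^ 2 - 2)
    (hrec : ∀ n x, l (n + 3) x = x * l (n + 2) x - l (n + 1) x) :
    ∀ (n : ℕ), 1 ≤ n → ∀ (x : ℝ),
      x ^ n = ∑ k ∈ Finset.range (n / 2 + 1),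
        (n.choose k : ℝ) * l (n - 2 * k) x := by
  have lmul : ∀ (a : ℕ) (x : ℝ), x * l (a + 2) x = l (a + 3) x + l (a + 1) x := by
    intro a x; have := hrec a x; linarith
  -- Step 1: multiplying the even expansion by x gives the odd expansion.
  have step1 : ∀ (m : ℕ) (x : ℝ),
      x * (∑ k ∈ range (m + 1), ((2 * m).choose k : ℝ) * l (2 * m - 2 * k) x)
        = ∑ k ∈ range (m + 1), ((2 * m + 1).choose k : ℝ) * l (2 * m + 1 - 2 * k) x := by
    intro m x
    rcases m with _ | m'
    · simp [h0, h1]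
    · set M := m' + 1 with hM
      have e1 : ∀ k ∈ range M, x * (((2 * M).choose k : ℝ) * l (2 * M - 2 * k) x)
          = ((2 * M).choose k : ℝ) * l (2 * M + 1 - 2 * k) x
            + ((2 * M).choose k : ℝ) * l (2 * M - 1 - 2 * k) x := by
        intro k hk
        have hk' := mem_range.mp hk
        rw [mul_left_comm, show 2 * M - 2 * k = 2 * (M - 1 - k) + 2 from by omega, lmul,
          show 2 * (M - 1 - k) + 3 = 2 * M + 1 - 2 * k from by omega,
          show 2 * (M - 1 - k) + 1 = 2 * M - 1 - 2 * k from by omega]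
        ring
      have e2 : ∀ k ∈ range M, (((2 * M + 1).choose (k + 1) : ℝ)) * l (2 * M + 1 - 2 * (k + 1)) x
          = ((2 * M).choose k : ℝ) * l (2 * M - 1 - 2 * k) x
            + ((2 * M).choose (k + 1) : ℝ) * l (2 * M - 1 - 2 * k) x := by
        intro k hk
        rw [show 2 * M + 1 - 2 * (k + 1) = 2 * M - 1 - 2 * k from by omega,
          show (2 * M + 1).choose (k + 1) = (2 * M).choose k + (2 * M).choose (k + 1) from
            Nat.choose_succ_succ _ _]
        push_cast; ring
      rw [Finset.mul_sum, Finset.sum_range_succ, Finset.sum_congr rfl e1,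
        Finset.sum_add_distrib, Finset.sum_range_succ' (fun k => ((2 * M + 1).choose k : ℝ) * l (2 * M + 1 - 2 * k) x),
        Finset.sum_congr rfl e2, Finset.sum_add_distrib]
      -- expand the first sum on the left and the shifted sum on the right
      have e3 : ∀ k ∈ range m', (((2 * M).choose (k + 1) : ℝ)) * l (2 * M + 1 - 2 * (k + 1)) x
          = ((2 * M).choose (k + 1) : ℝ) * l (2 * M - 1 - 2 * k) x := by
        intro k hk
        rw [show 2 * M + 1 - 2 * (k + 1) = 2 * M - 1 - 2 * k from by omega]
      rw [Finset.sum_range_succ' (fun k => ((2 * M).choose k : ℝ) * l (2 * M + 1 - 2 * k) x),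
        Finset.sum_congr rfl e3,
        Finset.sum_range_succ (fun k => ((2 * M).choose (k + 1) : ℝ) * l (2 * M - 1 - 2 * k) x)]
      rw [show 2 * M - 2 * M = 0 from by omega, h0,
        show 2 * M + 1 - 2 * 0 = 2 * M + 1 from by omega,
        show 2 * M - 1 - 2 * m' = 1 from by omega, h1,
        Nat.choose_zero_right, Nat.choose_zero_right]
      push_cast
      ring
  -- Step 2: multiplying the odd expansion by x gives the next even expansion.
  have step2 : ∀ (m : ℕ) (x : ℝ),
      x * (∑ k ∈ range (m + 1), ((2 * m + 1).choose k : ℝ) * l (2 * m + 1 - 2 * k) x)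
        = ∑ k ∈ range (m + 2), ((2 * m + 2).choose k : ℝ) * l (2 * m + 2 - 2 * k) x := by
    intro m x
    rcases m with _ | m'
    · simp [h0, h1, h2, Finset.sum_range_succ]
      ring
    · set M := m' + 1 with hM
      have e1 : ∀ k ∈ range M, x * (((2 * M + 1).choose k : ℝ) * l (2 * M + 1 - 2 * k) x)
          = ((2 * M + 1).choose k : ℝ) * l (2 * M + 2 - 2 * k) x
            + ((2 * M + 1).choose k : ℝ) * l (2 * M - 2 * k) x := by
        intro k hk
        have hk' := mem_range.mp hk
        rw [mul_left_comm, show 2 * M + 1 - 2 * k = (2 * (M - 1 - k) + 1) + 2 from by omega, lmul,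
          show (2 * (M - 1 - k) + 1) + 3 = 2 * M + 2 - 2 * k from by omega,
          show (2 * (M - 1 - k) + 1) + 1 = 2 * M - 2 * k from by omega]
        ring
      have e2 : ∀ k ∈ range (M + 1), (((2 * M + 2).choose (k + 1) : ℝ)) * l (2 * M + 2 - 2 * (k + 1)) x
          = ((2 * M + 1).choose k : ℝ) * l (2 * M - 2 * k) x
            + ((2 * M + 1).choose (k + 1) : ℝ) * l (2 * M - 2 * k) x := by
        intro k hk
        rw [show 2 * M + 2 - 2 * (k + 1) = 2 * M - 2 * k from by omega,
          show (2 * M + 2).choose (k + 1) = (2 * M + 1).choose k + (2 * M + 1).choose (k + 1) from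
            Nat.choose_succ_succ _ _]
        push_cast; ring
      rw [Finset.mul_sum, Finset.sum_range_succ, Finset.sum_congr rfl e1,
        Finset.sum_add_distrib]
      have e3 : ∀ k ∈ range m', (((2 * M + 1).choose (k + 1) : ℝ)) * l (2 * M + 2 - 2 * (k + 1)) x
          = ((2 * M + 1).choose (k + 1) : ℝ) * l (2 * M - 2 * k) x := by
        intro k hk
        rw [show 2 * M + 2 - 2 * (k + 1) = 2 * M - 2 * k from by omega]
      conv_rhs => rw [Finset.sum_range_succ' (fun k => ((2 * M + 2).choose k : ℝ) * l (2 * M + 2 - 2 * k) x) (M + 1),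
        Finset.sum_congr rfl e2, Finset.sum_add_distrib,
        Finset.sum_range_succ (fun k => ((2 * M + 1).choose k : ℝ) * l (2 * M - 2 * k) x) M,
        Finset.sum_range_succ (fun k => ((2 * M + 1).choose (k + 1) : ℝ) * l (2 * M - 2 * k) x) M,
        Finset.sum_range_succ (fun k => ((2 * M + 1).choose (k + 1) : ℝ) * l (2 * M - 2 * k) x) m']
      conv_lhs => rw [Finset.sum_range_succ' (fun k => ((2 * M + 1).choose k : ℝ) * l (2 * M + 2 - 2 * k) x) m',
        Finset.sum_congr rfl e3]
      rw [show 2 * M + 1 - 2 * M = 1 from by omega, h1,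
        show 2 * M - 2 * M = 0 from by omega, h0,
        show 2 * M + 2 - 2 * 0 = 2 * M + 2 from by omega,
        show 2 * M - 2 * m' = 2 from by omega, h2,
        show (2 * M + 1).choose (M + 1) = (2 * M + 1).choose M from by
          rw [← Nat.choose_symm (by omega : M ≤ 2 * M + 1), show 2 * M + 1 - M = M + 1 from by omega],
        Nat.choose_zero_right, Nat.choose_zero_right]
      push_cast
      simp only [hM]
      ring
  -- Both expansions, by induction on m.
  have key : ∀ m : ℕ,
      (∀ x : ℝ, x ^ (2 * m) = ∑ k ∈ range (m + 1), ((2 * m).choose k : ℝ) * l (2 * m - 2 * k) x)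
        ∧ (∀ x : ℝ, x ^ (2 * m + 1)
            = ∑ k ∈ range (m + 1), ((2 * m + 1).choose k : ℝ) * l (2 * m + 1 - 2 * k) x) := by
    intro m
    induction m with
    | zero => constructor <;> intro x <;> simp [h0, h1]
    | succ m ih =>
      have hodd : ∀ x : ℝ, x ^ (2 * m + 1)
          = ∑ k ∈ range (m + 1), ((2 * m + 1).choose k : ℝ) * l (2 * m + 1 - 2 * k) x := ih.2
      have heven : ∀ x : ℝ, x ^ (2 * (m + 1))
          = ∑ k ∈ range (m + 2), ((2 * (m + 1)).choose k : ℝ) * l (2 * (m + 1) - 2 * k) x := by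
        intro x
        have : x ^ (2 * (m + 1)) = x * x ^ (2 * m + 1) := by ring
        rw [this, hodd, step2]
        have : 2 * (m + 1) = 2 * m + 2 := by ring
        rw [this]
      refine ⟨heven, ?_⟩
      intro x
      have : x ^ (2 * (m + 1) + 1) = x * x ^ (2 * (m + 1)) := by ring
      rw [this, heven, step1]
  intro n hn x
  rcases Nat.even_or_odd n with ⟨m, rfl⟩ | ⟨m, rfl⟩
  · have h := (key m).1 x
    rw [show m + m = 2 * m from by ring, show 2 * m / 2 = m from by omega]
    exact h
  · have h := (key m).2 x
    rw [show (2 * m + 1) / 2 = m from by omega]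
    exact h
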